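/- arXiv:1607.04913 — 2 statements merged into one kernel-verified Lean document; each statement's English description precedes it below -/
import Mathlib

section
/- Let T be a rooted tree with n = |V(T)| vertices and let k be an integer with 2 ≤ k ≤ n. Then there exists a subset M ⊆ V(T) with |M| ≤ 3n/k such that every connected component of the forest obtained from T by deleting all vertices of M contains at most k vertices. -/
open SimpleGraph Walk

namespace TreePartitionAux

variable {V : Type*}

/-- Connectivity of `a` and `b` by a walk whose support stays inside `S`. -/
def Conn (T : SimpleGraph V) (S : Set V) (a b : V) : Prop :=
  ∃ w : T.Walk a b, ∀ x ∈ w.support, x ∈ S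

namespace Conn

variable {T : SimpleGraph V} {S S' : Set V} {a b c : V}

lemma mem_left (h : Conn T S a b) : a ∈ S := h.choose_spec _ h.choose.start_mem_support
lemma mem_right (h : Conn T S a b) : b ∈ S := h.choose_spec _ h.choose.end_mem_support

lemma of_mem (h : a ∈ S) : Conn T S a a := ⟨Walk.nil, by simpa using h⟩

lemma symm (h : Conn T S a b) : Conn T S b a := by
  obtain ⟨w, hw⟩ := h
  exact ⟨w.reverse, fun x hx => hw x (by simpa [Walk.support_reverse] using hx)⟩

lemma trans (h : Conn T S a b) (h' : Conn T S b c) : Conn T S a c := by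
  obtain ⟨w, hw⟩ := h; obtain ⟨w', hw'⟩ := h'
  refine ⟨w.append w', fun x hx => ?_⟩
  rcases (Walk.mem_support_append_iff _ _).1 hx with h | h
  exacts [hw x h, hw' x h]

lemma mono (hss : S ⊆ S') (h : Conn T S a b) : Conn T S' a b := by
  obtain ⟨w, hw⟩ := h; exact ⟨w, fun x hx => hss (hw x hx)⟩

end Conn

section Paths

variable {T : SimpleGraph V}

/-- The path between two vertices of a connected graph. -/
noncomputable def P (hc : T.Connected) (a b : V) : T.Path a b := by
  classical exact ((hc.preconnected a b).some.toPath)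

variable (hc : T.Connected) {a b x r : V}

lemma P_eq (ha : T.IsAcyclic) (p : T.Path a b) : P hc a b = p := ha.path_unique _ _

lemma support_P_subset (ha : T.IsAcyclic) (w : T.Walk a b) : (P hc a b).val.support ⊆ w.support := by
  classical
  rw [P_eq hc ha w.toPath]
  exact Walk.support_toPath_subset w

lemma P_split (ha : T.IsAcyclic) (hx : x ∈ (P hc a b).val.support) :
    (P hc a b).val = (P hc a x).val.append (P hc x b).val := by
  classical
  rw [P_eq hc ha ⟨(P hc a b).val.takeUntil x hx, (P hc a b).2.takeUntil hx⟩,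
      P_eq hc ha ⟨(P hc a b).val.dropUntil x hx, (P hc a b).2.dropUntil hx⟩]
  exact (Walk.take_spec _ hx).symm

lemma P_reverse (ha : T.IsAcyclic) : (P hc b a).val = (P hc a b).val.reverse := by
  rw [P_eq hc ha (P hc a b).reverse]; rfl

lemma mem_P_reverse (ha : T.IsAcyclic) : x ∈ (P hc b a).val.support ↔ x ∈ (P hc a b).val.support := by
  rw [P_reverse hc ha, Walk.support_reverse]; simp

/-- Separation lemma: if `x` is on the path from `r` to `a` but not on the path
from `r` to `b`, then `x` is on the path from `a` to `b`. -/
lemma mem_P_of_mem_not_mem (ha : T.IsAcyclic) (hxa : x ∈ (P hc r a).val.support)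
    (hxb : x ∉ (P hc r b).val.support) : x ∈ (P hc a b).val.support := by
  have hx' : x ∈ (P hc a r).val.support := (mem_P_reverse hc ha).2 hxa
  have hsub := support_P_subset hc ha ((P hc a b).val.append (P hc b r).val)
  rcases (Walk.mem_support_append_iff _ _).1 (hsub hx') with h | h
  · exact h
  · exact absurd ((mem_P_reverse hc ha).1 h) hxb

lemma isPath_concat {p : T.Walk a b} {c : V} (hp : p.IsPath) (h : T.Adj b c)
    (hcp : c ∉ p.support) : (p.concat h).IsPath := by
  rw [← Walk.isPath_reverse_iff, Walk.reverse_concat]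
  exact Walk.IsPath.cons hp.reverse (by simpa [Walk.support_reverse] using hcp)

/-- Key step: membership in the subtree below `u` (the child of `v`) is preserved
along edges avoiding `v`. -/
lemma step_mem (ha : T.IsAcyclic) {v u y z : V} (h_vu : T.Adj v u)
    (hu : (P hc r u).val = (P hc r v).val.concat h_vu)
    (hyz : T.Adj y z) (hzv : z ≠ v)
    (hy : u ∈ (P hc r y).val.support) : u ∈ (P hc r z).val.support := by
  classical
  by_cases hz : z ∈ (P hc r y).val.support
  · have hsplit := P_split hc ha hz
    have hy' : u ∈ ((P hc r z).val.append (P hc z y).val).support := by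
      rw [← hsplit]; exact hy
    rcases (Walk.mem_support_append_iff _ _).1 hy' with h | h
    · exact h
    · -- the path from z to y is the single edge
      have hzy : z ≠ y := T.ne_of_adj (hyz.symm)
      have hedge : (P hc z y) = ⟨Walk.cons hyz.symm Walk.nil, by
          simp [Walk.isPath_def, hzy]⟩ := ha.path_unique _ _
      rw [hedge] at h
      simp only [Walk.support_cons, Walk.support_nil, List.mem_cons, List.mem_singleton] at h
      rcases h with rfl | h
      · exact Walk.end_mem_support _
      · -- u = y; derive z = v, contradiction
        exfalso
        have huy : u = y := by simpa using h
        subst huy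
        have hPzu : (P hc r u).val = (P hc r z).val.concat hyz.symm := by
          rw [Walk.concat_eq_append]
          have := P_split hc ha hz
          rw [this, hedge]
        have e1 := congrArg Walk.reverse hPzu
        have e2 := congrArg Walk.reverse hu
        rw [Walk.reverse_concat] at e1 e2
        have g1 : ((P hc r u).val.reverse).getVert 1 = z := by
          rw [e1, Walk.getVert_cons_succ, Walk.getVert_zero]
        have g2 : ((P hc r u).val.reverse).getVert 1 = v := by
          rw [e2, Walk.getVert_cons_succ, Walk.getVert_zero]
        exact hzv (g1 ▸ g2)
  · have hpz : P hc r z = ⟨(P hc r y).val.concat hyz,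
        isPath_concat (P hc r y).2 hyz hz⟩ := ha.path_unique _ _
    rw [hpz]
    simp only [Walk.support_concat, List.concat_eq_append, List.mem_append]
    left; exact hy

lemma walk_step_mem (ha : T.IsAcyclic) {v u : V} (h_vu : T.Adj v u)
    (hu : (P hc r u).val = (P hc r v).val.concat h_vu) :
    ∀ {a x : V} (W : T.Walk a x), (∀ y ∈ W.support, y ≠ v) →
      u ∈ (P hc r a).val.support → u ∈ (P hc r x).val.support := by
  intro a x W
  induction W with
  | nil => exact fun _ h => h
  | @cons a' b' x' hadj W ih =>
    intro hsup hstart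
    refine ih (fun y hy => hsup y (by simp [Walk.support_cons, hy])) ?_
    exact step_mem hc ha h_vu hu hadj
      (hsup _ (by simp [Walk.support_cons])) hstart

lemma mem_class_of_mem_P (ha : T.IsAcyclic) {S : Set V} {w y : V} (hw : Conn T S r w)
    (hy : y ∈ (P hc r w).val.support) : Conn T S r y := by
  classical
  obtain ⟨W, hW⟩ := hw
  have hy' : y ∈ W.support := support_P_subset hc ha W hy
  exact ⟨W.takeUntil y hy', fun x hx => hW x (Walk.support_takeUntil_subset _ _ hx)⟩

end Paths

end TreePartitionAux

namespace TreePartitionAux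

variable {V : Type*} [Fintype V] {T : SimpleGraph V}

lemma main_lemma (hc : T.Connected) (ha : T.IsAcyclic) (k : ℕ) :
    ∀ n : ℕ, ∀ S : Set V, S.ncard ≤ n →
      ∃ M : Set V, M ⊆ S ∧ k * M.ncard ≤ S.ncard ∧
        ∀ w, {x | Conn T (S \ M) w x}.ncard ≤ k := by
  classical
  intro n
  induction n with
  | zero =>
    intro S hS
    refine ⟨∅, Set.empty_subset _, by simp, fun w => ?_⟩
    have hsub : {x | Conn T (S \ ∅) w x} ⊆ S := fun x hx => (hx.mem_right).1
    calc {x | Conn T (S \ ∅) w x}.ncard ≤ S.ncard := Set.ncard_le_ncard hsub S.toFinite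
    _ ≤ k := le_trans hS (Nat.zero_le k)
  | succ n ih =>
    intro S hS
    by_cases hbig : ∃ w, k < {x | Conn T S w x}.ncard
    · obtain ⟨r0, hr0⟩ := hbig
      -- the big connectivity class C
      set C := {x | Conn T S r0 x} with hC
      have hCS : C ⊆ S := fun x hx => hx.mem_right
      have hCne : C.Nonempty := Set.nonempty_of_ncard_ne_zero (by omega)
      have hr0S : r0 ∈ S := hCne.choose_spec.mem_left
      have hr0C : r0 ∈ C := Conn.of_mem hr0S
      -- subtrees
      set D := fun v => {w | w ∈ C ∧ v ∈ (P hc r0 w).val.support} with hD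
      have hDr0 : D r0 = C := by
        ext w; simp only [hD, Set.mem_setOf_eq, and_iff_left_iff_imp]
        exact fun _ => Walk.start_mem_support _
      set H := {v | v ∈ C ∧ k + 1 ≤ (D v).ncard} with hH
      have hHne : H.Nonempty := ⟨r0, hr0C, by rw [hDr0]; omega⟩
      obtain ⟨v, hvH, hmax⟩ :=
        Set.exists_max_image H (fun v => (P hc r0 v).val.length) (Set.toFinite _) hHne
      have hvC : v ∈ C := hvH.1
      have hvS : v ∈ S := hCS hvC
      have hvD : v ∈ D v := ⟨hvC, Walk.end_mem_support _⟩
      have hDvS : D v ⊆ S := fun w hw => hCS hw.1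
      have hDvcard : S.ncard = (S \ D v).ncard + (D v).ncard :=
        (Set.ncard_diff_add_ncard_of_subset hDvS S.toFinite).symm
      have hDvk : k + 1 ≤ (D v).ncard := hvH.2
      obtain ⟨M', hM'S, hM'card, hM'cls⟩ := ih (S \ D v) (by omega)
      have hvM' : v ∉ M' := fun h => (hM'S h).2 hvD
      refine ⟨insert v M', ?_, ?_, ?_⟩
      · exact Set.insert_subset hvS (hM'S.trans Set.diff_subset)
      · rw [Set.ncard_insert_of_notMem hvM' (Set.toFinite _)]
        have := hM'card
        calc k * (M'.ncard + 1) = k * M'.ncard + k := by ring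
        _ ≤ (S \ D v).ncard + k := by omega
        _ ≤ S.ncard := by omega
      · intro w
        by_cases hw : w ∈ S \ insert v M'
        · by_cases hwD : w ∈ D v
          · -- small side
            have hwv : w ≠ v := fun h => hw.2 (by simp [h])
            have hvP : v ∈ (P hc r0 w).val.support := hwD.2
            have hsplit := P_split hc ha hvP
            obtain ⟨u, h_vu, q', hq⟩ := Walk.exists_eq_cons_of_ne hwv.symm (P hc v w).val
            have huPw : u ∈ (P hc r0 w).val.support := by
              rw [hsplit, Walk.mem_support_append_iff]
              right; rw [hq]
              simp [Walk.support_cons]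
            have huC : u ∈ C := mem_class_of_mem_P hc ha hwD.1 huPw
            have hund : u ∉ (P hc r0 v).val.support := by
              have hnd := (P hc r0 w).2.support_nodup
              rw [hsplit, Walk.support_append] at hnd
              have hdisj := List.disjoint_of_nodup_append hnd
              intro hu
              refine hdisj hu ?_
              rw [hq, Walk.support_cons]
              exact Walk.start_mem_support q'
            have huPath : ((P hc r0 v).val.concat h_vu).IsPath :=
              isPath_concat (P hc r0 v).2 h_vu hund
            have hu_eq : (P hc r0 u).val = (P hc r0 v).val.concat h_vu := by
              rw [P_eq hc ha ⟨(P hc r0 v).val.concat h_vu, huPath⟩]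
            have hulen : (P hc r0 u).val.length = (P hc r0 v).val.length + 1 := by
              rw [hu_eq, Walk.length_concat]
            have huH : u ∉ H := fun h => by
              have := hmax u h; omega
            have hDuk : (D u).ncard ≤ k := by
              by_contra hgt
              exact huH ⟨huC, by omega⟩
            refine le_trans (Set.ncard_le_ncard ?_ (Set.toFinite _)) hDuk
            intro x hx
            obtain ⟨W, hW⟩ := hx
            refine ⟨?_, ?_⟩
            · exact hwD.1.trans ⟨W, fun y hy => (hW y hy).1⟩
            · refine walk_step_mem hc ha h_vu hu_eq W (fun y hy h => ?_) ?_
              · exact (hW y hy).2 (by simp [h])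
              · exact huPw
          · -- big side
            have hsub : {x | Conn T (S \ insert v M') w x}
                ⊆ {x | Conn T ((S \ D v) \ M') w x} := by
              intro x hx
              obtain ⟨W, hW⟩ := hx
              have hnotD : ∀ y ∈ W.support, y ∉ D v := by
                intro y hy hyD
                by_cases hwC : w ∈ C
                · have hvnw : v ∉ (P hc r0 w).val.support := fun h => hwD ⟨hwC, h⟩
                  have hvyw : v ∈ (P hc y w).val.support :=
                    mem_P_of_mem_not_mem hc ha hyD.2 hvnw
                  have hseg : Conn T (S \ insert v M') y w := by
                    refine Conn.symm ⟨W.takeUntil y hy, fun z hz => hW z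
                      (Walk.support_takeUntil_subset _ _ hz)⟩
                  obtain ⟨W2, hW2⟩ := hseg
                  have : v ∈ W2.support := support_P_subset hc ha W2 hvyw
                  exact (hW2 v this).2 (by simp)
                · have hyw : Conn T S y w := by
                    refine Conn.symm (Conn.mono ?_ ⟨W.takeUntil y hy, fun z hz => hW z
                      (Walk.support_takeUntil_subset _ _ hz)⟩)
                    exact fun z hz => hz.1
                  exact hwC (hyD.1.trans hyw)
              refine ⟨W, fun y hy => ?_⟩
              have h1 := hW y hy
              exact ⟨⟨h1.1, hnotD y hy⟩, fun h => h1.2 (Set.mem_insert_of_mem _ h)⟩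
            exact le_trans (Set.ncard_le_ncard hsub (Set.toFinite _)) (hM'cls w)
        · have : {x | Conn T (S \ insert v M') w x} = ∅ := by
            ext x; simp only [Set.mem_setOf_eq, Set.mem_empty_iff_false, iff_false]
            exact fun hx => hw hx.mem_left
          rw [this]; simp
    · push_neg at hbig
      refine ⟨∅, Set.empty_subset _, by simp, fun w => ?_⟩
      rw [Set.diff_empty]
      exact hbig w

end TreePartitionAux

/-- In a rooted tree `T` with root `r`, a vertex `u` is an ancestor of `v` if `u`
lies on the (unique) path from `r` to `v`. -/
def IsAncestor {V : Type*} (T : SimpleGraph V) (r u v : V) : Prop :=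
  ∀ p : T.Path r v, u ∈ p.val.support

/-- **Tree partition lemma.** For every finite rooted tree `T` on `n` vertices and
every integer `k` with `2 ≤ k ≤ n`, there is a set `M` of vertices with
`|M| ≤ 3n/k` such that every connected component of the forest obtained from `T`
by deleting the vertices of `M` has at most `k` vertices. -/
theorem tree_partition {V : Type*} [Fintype V] (T : SimpleGraph V) (r : V)
    (hT : T.IsTree) (k : ℕ) (hk2 : 2 ≤ k) (hkn : k ≤ Fintype.card V) :
    ∃ M : Set V,
      (M.ncard : ℝ) ≤ 3 * (Fintype.card V : ℝ) / (k : ℝ) ∧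
      ∀ c : (T.induce Mᶜ).ConnectedComponent, c.supp.ncard ≤ k := by
  classical
  obtain ⟨M, hMsub, hMcard, hMcls⟩ :=
    TreePartitionAux.main_lemma hT.isConnected hT.IsAcyclic k (Fintype.card V) Set.univ
      (by rw [Set.ncard_univ, Nat.card_eq_fintype_card])
  rw [Set.ncard_univ, Nat.card_eq_fintype_card] at hMcard
  refine ⟨M, ?_, ?_⟩
  · have hk2' : (2 : ℝ) ≤ (k : ℝ) := by exact_mod_cast hk2
    have hk0 : (0 : ℝ) < (k : ℝ) := by linarith
    have h1 : (k : ℝ) * M.ncard ≤ (Fintype.card V : ℝ) := by exact_mod_cast hMcard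
    have hn0 : (0 : ℝ) ≤ (Fintype.card V : ℝ) := by positivity
    rw [le_div_iff₀ hk0]
    nlinarith
  · intro c
    obtain ⟨v0, rfl⟩ := c.exists_rep
    have hsub : Subtype.val '' ((T.induce Mᶜ).connectedComponentMk v0).supp
        ⊆ {x | TreePartitionAux.Conn T (Set.univ \ M) v0.val x} := by
      rintro x ⟨w, hw, rfl⟩
      rw [SimpleGraph.ConnectedComponent.mem_supp_iff] at hw
      have hreach : (T.induce Mᶜ).Reachable v0 w :=
        (SimpleGraph.ConnectedComponent.exact hw).symm
      obtain ⟨p⟩ := hreach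
      refine ⟨p.map (SimpleGraph.Embedding.induce Mᶜ).toHom, ?_⟩
      intro y hy
      replace hy : y ∈ (p.map (SimpleGraph.Embedding.induce Mᶜ).toHom).support := hy
      rw [Walk.support_map, List.mem_map] at hy
      obtain ⟨z, hz, rfl⟩ := hy
      exact ⟨Set.mem_univ _, z.2⟩
    calc ((T.induce Mᶜ).connectedComponentMk v0).supp.ncard
        = (Subtype.val '' ((T.induce Mᶜ).connectedComponentMk v0).supp).ncard :=
          (Set.ncard_image_of_injective _ Subtype.val_injective).symm
      _ ≤ _ := Set.ncard_le_ncard hsub (Set.toFinite _)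
      _ ≤ k := hMcls v0.val
end

section
/- Let T be a rooted tree, let k ≥ 1 be an integer, and let M' ⊆ V(T) be a set of vertices such that every connected component of the forest obtained from T by deleting M' has at most k vertices. Define M = { x ∈ M' : |T(x)| ≥ k }. Then for every pair of vertices (u, v) such that u is an ancestor of v, if the unique path in T from u to v contains no vertex of M, then this path has at most 2k edges. -/
/-- The subtree `T(x)`: the set of all descendants of `x` (including `x`). -/
def Subtree {V : Type*} (T : SimpleGraph V) (r x : V) : Set V :=
  {v | IsAncestor T r x v}

open SimpleGraph Walk

/-- If some path from `r` to `z` contains `x`, then `x` is an ancestor of `z`. -/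
lemma anc_of_path {V : Type*} {T : SimpleGraph V} (hT : T.IsTree) {r z x : V}
    {W : T.Walk r z} (hW : W.IsPath) (hx : x ∈ W.support) : IsAncestor T r x z := by
  intro p
  obtain ⟨w, _, huniq⟩ := hT.existsUnique_path r z
  have h1 : p.val = w := huniq p.val p.prop
  have h2 : W = w := huniq W hW
  rw [h1, ← h2]
  exact hx

/-- Appending a `takeUntil` of the second part of a path to the first part is a path. -/
lemma isPath_append_takeUntil {V : Type*} [DecidableEq V] {T : SimpleGraph V} {r x v : V}
    {P : T.Walk r x} {q : T.Walk x v} (hpq : (P.append q).IsPath)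
    {z : V} (hz : z ∈ q.support) : (P.append (q.takeUntil z hz)).IsPath := by
  have hs := congrArg Walk.support (q.take_spec hz)
  rw [Walk.support_append] at hs
  -- (takeUntil).support ++ (dropUntil).support.tail = q.support
  have hA : (q.takeUntil z hz).support = x :: (q.takeUntil z hz).support.tail :=
    Walk.support_eq_cons _
  have hq : q.support = x :: q.support.tail := Walk.support_eq_cons q
  have htail : (q.takeUntil z hz).support.tail ++ (q.dropUntil z hz).support.tail
      = q.support.tail := by
    have := hs
    rw [hA, hq] at this
    rw [List.cons_append] at this
    exact List.cons_injective this
  have hsub : (q.takeUntil z hz).support.tail.Sublist q.support.tail := by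
    rw [← htail]; exact List.sublist_append_left _ _
  rw [Walk.isPath_def, Walk.support_append] at hpq ⊢
  exact hpq.sublist (hsub.append_left P.support)

/-- Counting lemma: the support of a path contained in a set `S` bounds by `S.ncard`. -/
lemma path_length_le_ncard {V : Type*} [DecidableEq V] [Fintype V] {T : SimpleGraph V} {a b : V}
    (W : T.Walk a b) (hW : W.IsPath) (S : Set V) (h : ∀ z ∈ W.support, z ∈ S) :
    W.length + 1 ≤ S.ncard := by
  have hnd : W.support.Nodup := hW.support_nodup
  have hcard : W.support.toFinset.card = W.length + 1 := by
    rw [List.toFinset_card_of_nodup hnd, Walk.length_support]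
  have hsub : (↑W.support.toFinset : Set V) ⊆ S := by
    intro z hz
    simp only [List.coe_toFinset, Set.mem_setOf_eq] at hz
    exact h z hz
  calc W.length + 1 = (↑W.support.toFinset : Set V).ncard := by
        rw [Set.ncard_coe_finset, hcard]
    _ ≤ S.ncard := Set.ncard_le_ncard hsub S.toFinite

/-- A walk avoiding `M'` stays inside one connected component of `T.induce M'ᶜ`. -/
lemma reach_induce {V : Type*} {T : SimpleGraph V} {M' : Set V} :
    ∀ {a b : V} (W : T.Walk a b) (h : ∀ z ∈ W.support, z ∉ M'),
    (T.induce M'ᶜ).Reachable ⟨a, h a W.start_mem_support⟩ ⟨b, h b W.end_mem_support⟩ := by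
  intro a b W
  induction W with
  | nil => intro h; rfl
  | cons hadj W' ih =>
    intro h
    have h' : ∀ z ∈ W'.support, z ∉ M' := fun z hz => h z (by simp [hz])
    refine Reachable.trans (Adj.reachable ?_) (ih h')
    exact hadj

/-- A path avoiding `M'` has at most `k` vertices, given the component bound. -/
lemma comp_bound {V : Type*} [DecidableEq V] [Fintype V] {T : SimpleGraph V} {M' : Set V} {k : ℕ}
    (hM' : ∀ c : (T.induce M'ᶜ).ConnectedComponent, c.supp.ncard ≤ k)
    {a b : V} (W : T.Walk a b) (hW : W.IsPath) (h : ∀ z ∈ W.support, z ∉ M') :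
    W.length + 1 ≤ k := by
  set c := (T.induce M'ᶜ).connectedComponentMk ⟨a, h a W.start_mem_support⟩ with hc
  have hS : ∀ z ∈ W.support, z ∈ Subtype.val '' c.supp := by
    intro z hz
    have hall : ∀ y ∈ (W.takeUntil z hz).support, y ∉ M' := fun y hy =>
      h y (W.support_takeUntil_subset hz hy)
    have hreach := reach_induce (W.takeUntil z hz) hall
    refine ⟨⟨z, h z hz⟩, ?_, rfl⟩
    rw [ConnectedComponent.mem_supp_iff, hc]
    exact ConnectedComponent.sound hreach.symm
  have h1 := path_length_le_ncard W hW _ hS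
  calc W.length + 1 ≤ (Subtype.val '' c.supp).ncard := h1
    _ = c.supp.ncard := Set.ncard_image_of_injective _ Subtype.val_injective
    _ ≤ k := hM' c


/-- Split a walk at the first vertex failing a predicate, if any. -/
lemma split_at_first_bad {V : Type*} {T : SimpleGraph V} (pred : V → Prop) {x v : V}
    (q : T.Walk x v) :
    (∀ z ∈ q.support, pred z) ∨
      ∃ (y : V) (q1 : T.Walk x y) (q2 : T.Walk y v), q = q1.append q2 ∧ ¬ pred y ∧
        ∀ z ∈ q1.support, z ≠ y → pred z := by
  induction q with
  | nil =>
    rename_i a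
    by_cases hx : pred a
    · left; intro z hz
      have : z = a := by simpa using hz
      subst this; exact hx
    · right
      exact ⟨a, Walk.nil, Walk.nil, rfl, hx, fun z hz hne =>
        absurd (by simpa using hz) hne⟩
  | cons hadj q' ih =>
    rename_i a y' v'
    by_cases hx : pred a
    · rcases ih with hall | ⟨y, q1, q2, heq, hy, hq1⟩
      · left
        intro z hz
        simp only [Walk.support_cons, List.mem_cons] at hz
        rcases hz with rfl | hz
        · exact hx
        · exact hall z hz
      · right
        refine ⟨y, Walk.cons hadj q1, q2, ?_, hy, ?_⟩
        · rw [Walk.cons_append, heq]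
        · intro z hz hne
          simp only [Walk.support_cons, List.mem_cons] at hz
          rcases hz with rfl | hz
          · exact hx
          · exact hq1 z hz hne
    · right
      exact ⟨a, Walk.nil, Walk.cons hadj q', rfl, hx,
        fun z hz hne => by simp at hz; exact (hne hz).elim⟩

/-- Let `M'` be a set of vertices of a rooted tree `T` such that every connected
component of the forest `T − M'` has at most `k` vertices, and let
`M = {x ∈ M' : |T(x)| ≥ k}`. Then for any ancestor-descendant pair `(u, v)`, if
the path in `T` from `u` to `v` avoids `M`, then this path has at most `2k` edges. -/
theorem short_path_avoiding_marked {V : Type*} [Fintype V] (T : SimpleGraph V)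
    (r : V) (hT : T.IsTree) (k : ℕ) (hk : 1 ≤ k) (M' M : Set V)
    (hM' : ∀ c : (T.induce M'ᶜ).ConnectedComponent, c.supp.ncard ≤ k)
    (hM : M = {x ∈ M' | k ≤ (Subtree T r x).ncard})
    (u v : V) (huv : IsAncestor T r u v)
    (havoid : ∀ p : T.Path u v, ∀ w ∈ p.val.support, w ∉ M) :
    ∀ p : T.Path u v, p.val.length ≤ 2 * k := by
  classical
  -- get the path from the root to `v`; it passes through `u`
  obtain ⟨w0⟩ := hT.isConnected.preconnected r v
  set Prv : T.Path r v := w0.toPath with hPrv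
  have hu : u ∈ Prv.val.support := huv Prv
  set P : T.Walk r u := Prv.val.takeUntil u hu with hPdef
  set q0 : T.Walk u v := Prv.val.dropUntil u hu with hq0def
  have hPq0 : (P.append q0).IsPath := by
    rw [hPdef, hq0def, Prv.val.take_spec hu]
    exact Prv.prop
  have hq0 : q0.IsPath := hPq0.of_append_right
  -- every vertex on `q0` avoids `M`
  have h0 : ∀ w ∈ q0.support, w ∉ M := havoid ⟨q0, hq0⟩
  -- heavy vertices avoiding `M` avoid `M'`
  have heavy_not : ∀ z, z ∉ M → k ≤ (Subtree T r z).ncard → z ∉ M' := by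
    intro z hzM hzk hzM'
    exact hzM (by rw [hM]; exact ⟨hzM', hzk⟩)
  intro p
  -- by uniqueness of paths, `p.val = q0`
  have hpq0 : p.val = q0 := by
    obtain ⟨w, _, huniq⟩ := hT.existsUnique_path u v
    rw [huniq p.val p.prop, ← huniq q0 hq0]
  rw [hpq0]
  rcases split_at_first_bad (fun z => k ≤ (Subtree T r z).ncard) q0 with
    hall | ⟨y, q1, q2, heq, hy, hq1⟩
  · -- all vertices heavy: one component, so at most `k` vertices
    have hnotM' : ∀ z ∈ q0.support, z ∉ M' := fun z hz =>
      heavy_not z (h0 z hz) (hall z hz)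
    have := comp_bound hM' q0 hq0 hnotM'
    omega
  · -- `y` is the first light vertex
    have hbig : ((P.append q1).append q2).IsPath := by
      rw [← Walk.append_assoc, ← heq]; exact hPq0
    have hq2path : q2.IsPath := hbig.of_append_right
    have hq1sub : ∀ z ∈ q1.support, z ∈ q0.support := by
      intro z hz; rw [heq, Walk.mem_support_append_iff]; exact Or.inl hz
    have hq2sub : ∀ z ∈ q2.support, z ∈ q0.support := by
      intro z hz; rw [heq, Walk.mem_support_append_iff]; exact Or.inr hz
    -- every vertex of `q2` is a descendant of `y`
    have hdesc : ∀ z ∈ q2.support, z ∈ Subtree T r y := by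
      intro z hz
      have hzpath : ((P.append q1).append (q2.takeUntil z hz)).IsPath :=
        isPath_append_takeUntil hbig hz
      have hymem : y ∈ ((P.append q1).append (q2.takeUntil z hz)).support := by
        rw [Walk.mem_support_append_iff]
        exact Or.inl (P.append q1).end_mem_support
      exact anc_of_path hT hzpath hymem
    -- bound on `q2` from the small subtree of `y`
    have hq2bound : q2.length + 1 ≤ (Subtree T r y).ncard :=
      path_length_le_ncard q2 hq2path _ hdesc
    have hylight : (Subtree T r y).ncard < k := lt_of_not_ge hy
    -- bound on `q1` via the component bound
    have hq1bound : q1.length ≤ k := by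
      by_cases hnil : q1.Nil
      · rw [Walk.nil_iff_length_eq] at hnil; omega
      · have hq1path : q1.IsPath := (hbig.of_append_left).of_append_right
        have hrev : q1.reverse.IsPath := hq1path.reverse
        have hrnil : ¬ q1.reverse.Nil := by
          rw [Walk.nil_iff_length_eq, Walk.length_reverse]
          rw [Walk.nil_iff_length_eq] at hnil
          exact hnil
        have htpath : q1.reverse.tail.IsPath := hrev.tail
        have htsup : ∀ z ∈ q1.reverse.tail.support, z ∉ M' := by
          intro z hz
          rw [Walk.support_tail_of_not_nil _ hrnil] at hz
          have hz1 : z ∈ q1.reverse.support := List.mem_of_mem_tail hz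
          rw [Walk.support_reverse, List.mem_reverse] at hz1
          have hzy : z ≠ y := by
            intro hzy
            have hcons : q1.reverse.support = y :: q1.reverse.support.tail :=
              Walk.support_eq_cons _
            have hnd := hrev.support_nodup
            rw [hcons] at hnd
            exact (List.nodup_cons.mp hnd).1 (hzy ▸ hz)
          exact heavy_not z (h0 z (hq1sub z hz1)) (hq1 z hz1 hzy)
        have := comp_bound hM' q1.reverse.tail htpath htsup
        have hlen : q1.reverse.tail.length + 1 = q1.reverse.length :=
          Walk.length_tail_add_one hrnil
        rw [Walk.length_reverse] at hlen
        omega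
    have hlen0 : q0.length = q1.length + q2.length := by
      rw [heq, Walk.length_append]
    omega
end
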